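/- Let G be a connected simple graph on n ≥ 2 vertices with largest adjacency eigenvalue λ₁, let γ^(k) = sqrt( (Σ_i d_{k+1}(i)²) / (Σ_i d_k(i)²) ), and define φ(x) = e^x + (n − 1) − x. Then the sequence {φ(γ^(k))}_{k≥0} is monotonically increasing and converges to φ(λ₁). -/

import Mathlib

open Matrix Finset

section Aux

theorem powUDU' {n : ℕ} {U : Matrix (Fin n) (Fin n) ℝ} {d : Fin n → ℝ}
    (hU : star U * U = 1) (hU' : U * star U = 1)
    {A : Matrix (Fin n) (Fin n) ℝ} (hspec : A = U * diagonal d * star U) (k : ℕ) :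
    A ^ k = U * diagonal (fun j => d j ^ k) * star U := by
  have key : ∀ B C : Matrix (Fin n) (Fin n) ℝ,
      (U * B * star U) * (U * C * star U) = U * (B * C) * star U := by
    intro B C
    have h2 : star U * (U * (C * star U)) = C * star U := by
      rw [← Matrix.mul_assoc, hU, Matrix.one_mul]
    simp only [Matrix.mul_assoc, h2]
  induction k with
  | zero => simp [pow_zero, diagonal_one, hU']
  | succ k ih =>
    rw [pow_succ, ih, hspec, key, diagonal_mul_diagonal,
      show (fun j => d j ^ k * d j) = fun j => d j ^ (k + 1) from
        funext fun j => (pow_succ _ _).symm]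

theorem quadUDU' {n : ℕ} {U : Matrix (Fin n) (Fin n) ℝ} {d : Fin n → ℝ}
    (hU : star U * U = 1) (hU' : U * star U = 1)
    {A : Matrix (Fin n) (Fin n) ℝ} (hspec : A = U * diagonal d * star U) (k : ℕ)
    (x : Fin n → ℝ) :
    x ⬝ᵥ ((A ^ k) *ᵥ x) = ∑ j, d j ^ k * ((star U *ᵥ x) j) ^ 2 := by
  have hstar : star U = Uᵀ := by
    rw [star_eq_conjTranspose, conjTranspose_eq_transpose_of_trivial]
  rw [powUDU' hU hU' hspec k, ← mulVec_mulVec, ← mulVec_mulVec]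
  have h1 : x ⬝ᵥ (U *ᵥ (diagonal (fun j => d j ^ k) *ᵥ (star U *ᵥ x)))
      = (star U *ᵥ x) ⬝ᵥ (diagonal (fun j => d j ^ k) *ᵥ (star U *ᵥ x)) := by
    rw [dotProduct_mulVec, ← mulVec_transpose, ← hstar]
  rw [h1]
  simp only [dotProduct, mulVec_diagonal]
  exact Finset.sum_congr rfl fun j _ => by ring

theorem crossDot' {n : ℕ} {A : Matrix (Fin n) (Fin n) ℝ} (hA : A.IsHermitian)
    (k m : ℕ) (o : Fin n → ℝ) :
    (A ^ k *ᵥ o) ⬝ᵥ (A ^ m *ᵥ o) = o ⬝ᵥ (A ^ (k + m) *ᵥ o) := by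
  have hT : (A ^ k)ᵀ = A ^ k := by
    rw [transpose_pow, show Aᵀ = A from by
      rw [← conjTranspose_eq_transpose_of_trivial]; exact hA]
  rw [dotProduct_comm, dotProduct_mulVec, ← mulVec_transpose, hT, mulVec_mulVec, ← pow_add,
    dotProduct_comm]

theorem entry_nonneg_pow' {n : ℕ} {A : Matrix (Fin n) (Fin n) ℝ}
    (hA : ∀ i j, 0 ≤ A i j) (k : ℕ) : ∀ i j, 0 ≤ (A ^ k) i j := by
  induction k with
  | zero => intro i j; rw [pow_zero]; by_cases h : i = j <;> simp [Matrix.one_apply, h]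
  | succ k ih =>
    intro i j
    rw [pow_succ, Matrix.mul_apply]
    exact Finset.sum_nonneg fun l _ => mul_nonneg (ih i l) (hA l j)

theorem trace_le_dot' {n : ℕ} {A : Matrix (Fin n) (Fin n) ℝ}
    (hA : ∀ i j, 0 ≤ A i j) :
    Matrix.trace A ≤ (fun _ => (1:ℝ)) ⬝ᵥ (A *ᵥ fun _ => (1:ℝ)) := by
  unfold Matrix.trace dotProduct Matrix.mulVec dotProduct
  simp only [one_mul, mul_one, Matrix.diag]
  exact Finset.sum_le_sum fun i _ => Finset.single_le_sum (fun j _ => hA i j) (mem_univ i)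

theorem traceUDU' {n : ℕ} {A U : Matrix (Fin n) (Fin n) ℝ} {d : Fin n → ℝ}
    (hU : star U * U = 1) (hspec : A = U * diagonal d * star U) :
    Matrix.trace A = ∑ j, d j := by
  rw [hspec, Matrix.trace_mul_comm, ← Matrix.mul_assoc, hU, Matrix.one_mul, Matrix.trace_diagonal]

theorem dot_self_eigBasis' {n : ℕ} {A : Matrix (Fin n) (Fin n) ℝ}
    (hA : A.IsHermitian) (j : Fin n) :
    (⇑(hA.eigenvectorBasis j) : Fin n → ℝ) ⬝ᵥ ⇑(hA.eigenvectorBasis j) = 1 := by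
  have h := hA.eigenvectorBasis.orthonormal.1 j
  rw [EuclideanSpace.norm_eq] at h
  have h2 : ∑ i, ‖hA.eigenvectorBasis j i‖ ^ 2 = 1 := by
    have := congrArg (fun x => x ^ 2) h
    simpa [Real.sq_sqrt (Finset.sum_nonneg fun i _ => sq_nonneg _)] using this
  unfold dotProduct
  rw [← h2]
  refine Finset.sum_congr rfl fun i _ => ?_
  rw [Real.norm_eq_abs, sq_abs, sq]

theorem abs_eig_le' {n : ℕ} {A : Matrix (Fin n) (Fin n) ℝ}
    (hA : A.IsHermitian) (hpos : ∀ i j, 0 ≤ A i j) {c : ℝ}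
    (hray : ∀ x : Fin n → ℝ, x ⬝ᵥ (A *ᵥ x) ≤ c * (x ⬝ᵥ x)) (j : Fin n) :
    |hA.eigenvalues j| ≤ c := by
  set u : Fin n → ℝ := ⇑(hA.eigenvectorBasis j) with hu
  have hnorm : u ⬝ᵥ u = 1 := dot_self_eigBasis' hA j
  have heig : u ⬝ᵥ (A *ᵥ u) = hA.eigenvalues j := by
    rw [hA.mulVec_eigenvectorBasis]
    rw [show (hA.eigenvalues j • ⇑(hA.eigenvectorBasis j) : Fin n → ℝ)
      = hA.eigenvalues j • u from rfl]
    rw [dotProduct_smul, smul_eq_mul, hnorm, mul_one]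
  set au : Fin n → ℝ := fun i => |u i| with hau
  have hanorm : au ⬝ᵥ au = 1 := by
    rw [← hnorm]
    exact Finset.sum_congr rfl fun i _ => by simp [hau, abs_mul_abs_self]
  have hexpand : ∀ v w : Fin n → ℝ, v ⬝ᵥ (A *ᵥ w) = ∑ i, ∑ l, v i * (A i l * w l) := by
    intro v w
    simp [dotProduct, mulVec, Finset.mul_sum]
  have hneg : -(u ⬝ᵥ (A *ᵥ u)) ≤ au ⬝ᵥ (A *ᵥ au) := by
    rw [hexpand, hexpand, ← Finset.sum_neg_distrib]
    refine Finset.sum_le_sum fun i _ => ?_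
    rw [← Finset.sum_neg_distrib]
    refine Finset.sum_le_sum fun l _ => ?_
    calc -(u i * (A i l * u l)) = A i l * (-(u i * u l)) := by ring
      _ ≤ A i l * (|u i| * |u l|) := by
        refine mul_le_mul_of_nonneg_left ?_ (hpos i l)
        rw [← abs_mul]
        exact neg_le_abs _
      _ = au i * (A i l * au l) := by rw [hau]; ring
  have h1 : -(hA.eigenvalues j) ≤ c := by
    rw [← heig]
    calc -(u ⬝ᵥ (A *ᵥ u)) ≤ au ⬝ᵥ (A *ᵥ au) := hneg
      _ ≤ c * (au ⬝ᵥ au) := hray au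
      _ = c := by rw [hanorm, mul_one]
  have h2 : hA.eigenvalues j ≤ c := by
    rw [← heig]
    calc u ⬝ᵥ (A *ᵥ u) ≤ c * (u ⬝ᵥ u) := hray u
      _ = c := by rw [hnorm, mul_one]
  exact abs_le.mpr ⟨by linarith, h2⟩

theorem rpow_root_le' {a b : ℝ} {k : ℕ} (hk : k ≠ 0) (ha : 0 ≤ a) (hb : 0 ≤ b)
    (h : b ≤ a ^ k) : b ^ ((k : ℝ)⁻¹) ≤ a := by
  have h1 : b ^ ((k:ℝ)⁻¹) ≤ (a ^ k : ℝ) ^ ((k:ℝ)⁻¹) :=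
    Real.rpow_le_rpow hb h (by positivity)
  rwa [← Real.rpow_natCast a k, ← Real.rpow_mul ha,
    mul_inv_cancel₀ (by exact_mod_cast hk : (k:ℝ) ≠ 0), Real.rpow_one] at h1

theorem tendsto_of_bounds' {t : ℕ → ℝ} {L C : ℝ} (hC : 0 < C) (hL : 0 ≤ L)
    (ht0 : ∀ k, 0 ≤ t k) (hub : ∀ k, t k ≤ L)
    (hlb : ∀ k, k ≠ 0 → L ^ k * C ≤ t k ^ k) :
    Filter.Tendsto t Filter.atTop (nhds L) := by
  have hlow : ∀ k : ℕ, k ≠ 0 → L * C ^ ((k:ℝ)⁻¹) ≤ t k := by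
    intro k hk
    have h1 : (L ^ k * C) ^ ((k:ℝ)⁻¹) ≤ t k :=
      rpow_root_le' hk (ht0 k) (by positivity) (hlb k hk)
    have h2 : (L ^ k * C) ^ ((k:ℝ)⁻¹) = L * C ^ ((k:ℝ)⁻¹) := by
      rw [Real.mul_rpow (by positivity) hC.le, ← Real.rpow_natCast L k, ← Real.rpow_mul hL,
        mul_inv_cancel₀ (by exact_mod_cast hk : (k:ℝ) ≠ 0), Real.rpow_one]
    rwa [h2] at h1
  have hinv : Filter.Tendsto (fun k : ℕ => ((k:ℝ))⁻¹) Filter.atTop (nhds 0) :=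
    tendsto_inv_atTop_nhds_zero_nat
  have hCco : Filter.Tendsto (fun k : ℕ => C ^ ((k:ℝ)⁻¹)) Filter.atTop (nhds 1) := by
    have hrw : ∀ x : ℝ, C ^ x = Real.exp (Real.log C * x) := fun x =>
      Real.rpow_def_of_pos hC x
    simp only [hrw]
    have h3 : Filter.Tendsto (fun k : ℕ => Real.log C * ((k:ℝ))⁻¹) Filter.atTop (nhds 0) := by
      simpa using hinv.const_mul (Real.log C)
    have := (Real.continuous_exp.continuousAt (x := 0)).tendsto.comp h3
    simpa [Function.comp_def] using this
  have hlowten : Filter.Tendsto (fun k : ℕ => L * C ^ ((k:ℝ)⁻¹)) Filter.atTop (nhds L) := by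
    simpa using hCco.const_mul L
  refine tendsto_of_tendsto_of_tendsto_of_le_of_le' hlowten tendsto_const_nhds ?_ ?_
  · filter_upwards [Filter.eventually_gt_atTop 0] with k hk
    exact hlow k (by omega : k ≠ 0)
  · exact Filter.Eventually.of_forall hub

theorem phiMono' {c a b : ℝ} (ha : 1 ≤ a) (hab : a ≤ b) :
    Real.exp a + c - a ≤ Real.exp b + c - b := by
  have h1 := Real.add_one_le_exp (b - a)
  have h2 : 1 ≤ Real.exp a := Real.one_le_exp (by linarith)
  have h3 : Real.exp b = Real.exp a * Real.exp (b - a) := by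
    rw [← Real.exp_add]; ring_nf
  nlinarith

end Aux



/-- The adjacency matrix of a simple graph over `ℝ` is Hermitian. -/
theorem adjHerm {n : ℕ} (G : SimpleGraph (Fin n)) [DecidableRel G.Adj] :
    (G.adjMatrix ℝ).IsHermitian := by
  rw [Matrix.IsHermitian, Matrix.conjTranspose_eq_transpose_of_trivial]
  exact G.isSymm_adjMatrix

/-- The (real) eigenvalues of the adjacency matrix of `G`. -/
noncomputable def graphEigs {n : ℕ} (G : SimpleGraph (Fin n)) [DecidableRel G.Adj] :
    Fin n → ℝ := (adjHerm G).eigenvalues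

/-- The Estrada index `EE(G) = ∑ i, exp (λ i)`. -/
noncomputable def estradaIndex {n : ℕ} (G : SimpleGraph (Fin n)) [DecidableRel G.Adj] : ℝ :=
  ∑ i, Real.exp (graphEigs G i)

/-- `dwalk G k i` is the number of walks of length `k` starting at `i`,
computed as `(A^k 𝟙)_i`. -/
noncomputable def dwalk {n : ℕ} (G : SimpleGraph (Fin n)) [DecidableRel G.Adj]
    (k : ℕ) (i : Fin n) : ℝ :=
  ((G.adjMatrix ℝ) ^ k).mulVec (fun _ => 1) i

/-- The sequence `γ^(k) = sqrt((∑ i, d_{k+1}(i)²)/(∑ i, d_k(i)²))`. -/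
noncomputable def gammaSeq {n : ℕ} (G : SimpleGraph (Fin n)) [DecidableRel G.Adj]
    (k : ℕ) : ℝ :=
  Real.sqrt ((∑ i, dwalk G (k + 1) i ^ 2) / (∑ i, dwalk G k i ^ 2))

section GraphAux

variable {n : ℕ} (G : SimpleGraph (Fin n)) [DecidableRel G.Adj]

theorem exists_adj' (hn : 2 ≤ n) (hconn : G.Connected) (i : Fin n) : ∃ j, G.Adj i j := by
  have : Nontrivial (Fin n) := by
    rw [← Fintype.one_lt_card_iff_nontrivial, Fintype.card_fin]; omega
  obtain ⟨j, hj⟩ := exists_ne i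
  obtain ⟨w⟩ := hconn.preconnected i j
  cases w with
  | nil => exact absurd rfl hj.symm
  | cons h p => exact ⟨_, h⟩

theorem dwalk_zero' (i : Fin n) : dwalk G 0 i = 1 := by
  simp [dwalk, pow_zero, one_mulVec]

theorem dwalk_succ' (k : ℕ) (i : Fin n) :
    dwalk G (k + 1) i = ∑ j ∈ G.neighborFinset i, dwalk G k j := by
  unfold dwalk
  rw [pow_succ', ← mulVec_mulVec]
  exact SimpleGraph.adjMatrix_mulVec_apply _ _ _

theorem dwalk_bounds' (hn : 2 ≤ n) (hconn : G.Connected) (k : ℕ) (i : Fin n) :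
    1 ≤ dwalk G k i ∧ dwalk G k i ≤ dwalk G (k + 1) i := by
  induction k generalizing i with
  | zero =>
    refine ⟨le_of_eq (dwalk_zero' G i).symm, ?_⟩
    rw [dwalk_zero', dwalk_succ']
    obtain ⟨j, hj⟩ := exists_adj' G hn hconn i
    have hj' : j ∈ G.neighborFinset i := by rwa [SimpleGraph.mem_neighborFinset]
    calc (1:ℝ) = dwalk G 0 j := (dwalk_zero' G j).symm
      _ ≤ ∑ j ∈ G.neighborFinset i, dwalk G 0 j :=
        Finset.single_le_sum (fun l _ => by simp [dwalk_zero']) hj'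
  | succ k ih =>
    constructor
    · rw [dwalk_succ']
      obtain ⟨j, hj⟩ := exists_adj' G hn hconn i
      have hj' : j ∈ G.neighborFinset i := by rwa [SimpleGraph.mem_neighborFinset]
      calc (1:ℝ) ≤ dwalk G k j := (ih j).1
        _ ≤ ∑ j ∈ G.neighborFinset i, dwalk G k j :=
          Finset.single_le_sum (fun l _ => le_trans zero_le_one (ih l).1) hj'
    · rw [dwalk_succ', dwalk_succ']
      exact Finset.sum_le_sum fun j _ => (ih j).2

end GraphAux

/-- For a connected simple graph on `n ≥ 2` vertices and
`φ(x) = e^x + (n − 1) − x`, the sequence `{φ(γ^(k))}` is monotonically increasing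
and converges to `φ(λ₁)`. -/
theorem phi_gammaSeq_monotone_tendsto {n : ℕ} (hn : 2 ≤ n)
    (G : SimpleGraph (Fin n)) [DecidableRel G.Adj] (hconn : G.Connected)
    (lam1 : ℝ) (hlam : IsGreatest (Set.range (graphEigs G)) lam1) :
    Monotone (fun k => Real.exp (gammaSeq G k) + ((n : ℝ) - 1) - gammaSeq G k) ∧
      Filter.Tendsto (fun k => Real.exp (gammaSeq G k) + ((n : ℝ) - 1) - gammaSeq G k)
        Filter.atTop (nhds (Real.exp lam1 + ((n : ℝ) - 1) - lam1)) := by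
  classical
  set A : Matrix (Fin n) (Fin n) ℝ := G.adjMatrix ℝ with hAdef
  have hA : A.IsHermitian := adjHerm G
  set U : Matrix (Fin n) (Fin n) ℝ := (hA.eigenvectorUnitary : Matrix (Fin n) (Fin n) ℝ)
    with hUdef
  set μ : Fin n → ℝ := hA.eigenvalues with hμdef
  have hμeq : graphEigs G = μ := rfl
  have hU : star U * U = 1 := Matrix.mem_unitaryGroup_iff'.mp (hA.eigenvectorUnitary).2
  have hU' : U * star U = 1 := Matrix.mem_unitaryGroup_iff.mp (hA.eigenvectorUnitary).2
  have hspec : A = U * Matrix.diagonal μ * star U := by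
    have := hA.spectral_theorem
    rwa [RCLike.ofReal_real_eq_id, Function.id_comp] at this
  set o : Fin n → ℝ := fun _ => 1 with hodef
  set s : ℕ → ℝ := fun k => ∑ i, dwalk G k i ^ 2 with hsdef
  set w : Fin n → ℝ := star U *ᵥ o with hwdef
  have hposA : ∀ i j, 0 ≤ A i j := by
    intro i j
    rw [hAdef, SimpleGraph.adjMatrix_apply]
    split <;> norm_num
  -- dwalk as mulVec
  have hdw : ∀ k, (fun i => dwalk G k i) = (A ^ k *ᵥ o) := fun k => rfl
  -- s as quadratic form
  have hs_dot : ∀ k : ℕ, s k = o ⬝ᵥ (A ^ (k + k) *ᵥ o) := by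
    intro k
    show (∑ i, dwalk G k i ^ 2) = _
    have : (∑ i, dwalk G k i ^ 2) = (A ^ k *ᵥ o) ⬝ᵥ (A ^ k *ᵥ o) := by
      unfold dotProduct
      exact Finset.sum_congr rfl fun i _ => by rw [sq]; rfl
    rw [this, crossDot' hA]
  have hs_eq : ∀ k : ℕ, s k = ∑ j, (μ j ^ k * w j) ^ 2 := by
    intro k
    rw [hs_dot k, quadUDU' hU hU' hspec (k + k) o]
    exact Finset.sum_congr rfl fun j _ => by rw [pow_add]; ring
  -- basic dwalk bounds
  have hdwb := dwalk_bounds' G hn hconn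
  have hs_ge : ∀ k, (n : ℝ) ≤ s k := by
    intro k
    rw [hsdef]
    calc (n : ℝ) = ∑ _i : Fin n, (1:ℝ) := by simp
      _ ≤ ∑ i, dwalk G k i ^ 2 := Finset.sum_le_sum fun i _ => by
          have := (hdwb k i).1; nlinarith
  have hs_pos : ∀ k, 0 < s k := fun k => lt_of_lt_of_le (by positivity) (hs_ge k)
  have hs0 : s 0 = n := by
    rw [hsdef]
    simp [dwalk_zero']
  have hs_mono : ∀ k, s k ≤ s (k + 1) := by
    intro k
    rw [hsdef]
    refine Finset.sum_le_sum fun i _ => ?_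
    have h1 := (hdwb k i).1
    have h2 := (hdwb k i).2
    nlinarith
  -- Cauchy-Schwarz
  have hcs : ∀ k, s (k + 1) ^ 2 ≤ s k * s (k + 2) := by
    intro k
    have hmid : s (k + 1) = ∑ i, dwalk G k i * dwalk G (k + 2) i := by
      rw [hs_dot (k + 1)]
      have : (∑ i, dwalk G k i * dwalk G (k + 2) i)
          = (A ^ k *ᵥ o) ⬝ᵥ (A ^ (k + 2) *ᵥ o) := rfl
      rw [this, crossDot' hA, show k + (k + 2) = (k + 1) + (k + 1) from by omega]
    rw [hmid, hsdef]
    exact Finset.sum_mul_sq_le_sq_mul_sq _ _ _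
  -- Rayleigh bound
  have hμle : ∀ j, μ j ≤ lam1 := fun j => hlam.2 ⟨j, rfl⟩
  have hray : ∀ x : Fin n → ℝ, x ⬝ᵥ (A *ᵥ x) ≤ lam1 * (x ⬝ᵥ x) := by
    intro x
    have h1 : x ⬝ᵥ (A *ᵥ x) = ∑ j, μ j ^ 1 * ((star U *ᵥ x) j) ^ 2 := by
      rw [← quadUDU' hU hU' hspec 1 x, pow_one]
    have h0 : x ⬝ᵥ x = ∑ j, μ j ^ 0 * ((star U *ᵥ x) j) ^ 2 := by
      rw [← quadUDU' hU hU' hspec 0 x, pow_zero, Matrix.one_mulVec]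
    rw [h1, h0, Finset.mul_sum]
    refine Finset.sum_le_sum fun j _ => ?_
    simp only [pow_one, pow_zero, one_mul]
    have := sq_nonneg ((star U *ᵥ x) j)
    exact mul_le_mul_of_nonneg_right (hμle j) this
  have habs : ∀ j, |μ j| ≤ lam1 := abs_eig_le' hA hposA hray
  have hlam0 : 0 ≤ lam1 := le_trans (abs_nonneg _) (habs ⟨0, by omega⟩)
  -- upper bound on t
  have hsq_le : ∀ j, μ j ^ 2 ≤ lam1 ^ 2 := by
    intro j
    have := abs_le.mp (habs j)
    nlinarith
  have hs_succ_le : ∀ k, s (k + 1) ≤ lam1 ^ 2 * s k := by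
    intro k
    rw [hs_eq k, hs_eq (k + 1), Finset.mul_sum]
    refine Finset.sum_le_sum fun j _ => ?_
    have h1 : (μ j ^ (k+1) * w j) ^ 2 = μ j ^ 2 * (μ j ^ k * w j) ^ 2 := by ring
    rw [h1]
    exact mul_le_mul_of_nonneg_right (hsq_le j) (sq_nonneg _)
  -- trace lower bound: lam1 ^ (k+k) ≤ s k
  have htr : ∀ k, lam1 ^ (k + k) ≤ s k := by
    intro k
    obtain ⟨j0, hj0⟩ := hlam.1
    have hμj0 : μ j0 = lam1 := hj0
    have hpow : A ^ (k + k) = U * Matrix.diagonal (fun j => μ j ^ (k + k)) * star U :=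
      powUDU' hU hU' hspec (k + k)
    have htr1 : Matrix.trace (A ^ (k + k)) = ∑ j, μ j ^ (k + k) :=
      traceUDU' hU hpow
    have htr2 : lam1 ^ (k + k) ≤ ∑ j, μ j ^ (k + k) := by
      have h1 : ∀ j, (0:ℝ) ≤ μ j ^ (k + k) := fun j => by
        rw [pow_add, ← sq]
        exact sq_nonneg _
      calc lam1 ^ (k + k) = μ j0 ^ (k + k) := by rw [hμj0]
        _ ≤ ∑ j, μ j ^ (k + k) :=
          Finset.single_le_sum (fun j _ => h1 j) (Finset.mem_univ j0)
    have htr3 : Matrix.trace (A ^ (k + k)) ≤ o ⬝ᵥ (A ^ (k + k) *ᵥ o) :=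
      trace_le_dot' (entry_nonneg_pow' hposA (k + k))
    rw [← hs_dot k] at htr3
    linarith [htr2, htr1 ▸ htr3]
  -- the ratio sequence
  set t : ℕ → ℝ := fun k => s (k + 1) / s k with htdef
  have ht1 : ∀ k, 1 ≤ t k := fun k => (one_le_div (hs_pos k)).mpr (hs_mono k)
  have ht0 : ∀ k, 0 ≤ t k := fun k => le_trans zero_le_one (ht1 k)
  have htmono : Monotone t := by
    refine monotone_nat_of_le_succ fun k => ?_
    rw [htdef]
    rw [div_le_div_iff₀ (hs_pos k) (hs_pos (k + 1))]
    have := hcs k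
    nlinarith [hs_pos k, hs_pos (k+1), hs_pos (k+2)]
  have htub : ∀ k, t k ≤ lam1 ^ 2 := by
    intro k
    rw [htdef, div_le_iff₀ (hs_pos k)]
    exact hs_succ_le k
  have hts : ∀ k, s (k + 1) = t k * s k := fun k =>
    (div_mul_cancel₀ _ (hs_pos k).ne').symm
  have hkey : ∀ k m, m ≤ k → s m ≤ t k ^ m * s 0 := by
    intro k m
    induction m with
    | zero => intro _; simp
    | succ m ih =>
      intro hm
      have hm' : m ≤ k := by omega
      calc s (m + 1) = t m * s m := hts m
        _ ≤ t k * (t k ^ m * s 0) := by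
            refine mul_le_mul (htmono hm') (ih hm') (hs_pos m).le (ht0 k)
        _ = t k ^ (m + 1) * s 0 := by ring
  have hnpos : (0:ℝ) < n := by
    have h0 : (0:ℕ) < n := by omega
    exact_mod_cast h0
  have hlb : ∀ k, k ≠ 0 → (lam1 ^ 2) ^ k * (n:ℝ)⁻¹ ≤ t k ^ k := by
    intro k hk
    have h1 : lam1 ^ (k + k) ≤ t k ^ k * (n:ℝ) := by
      calc lam1 ^ (k + k) ≤ s k := htr k
        _ ≤ t k ^ k * s 0 := hkey k k le_rfl
        _ = t k ^ k * (n:ℝ) := by rw [hs0]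
    have h2 : (lam1 ^ 2) ^ k = lam1 ^ (k + k) := by
      rw [← pow_mul]
      congr 1
      omega
    calc (lam1 ^ 2) ^ k * (n:ℝ)⁻¹ = lam1 ^ (k + k) * (n:ℝ)⁻¹ := by rw [h2]
      _ ≤ (t k ^ k * (n:ℝ)) * (n:ℝ)⁻¹ := mul_le_mul_of_nonneg_right h1 (by positivity)
      _ = t k ^ k := by field_simp
  -- tendsto of t
  have httend : Filter.Tendsto t Filter.atTop (nhds (lam1 ^ 2)) :=
    tendsto_of_bounds' (by positivity) (by positivity) ht0 htub hlb
  -- gammaSeq = sqrt ∘ t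
  have hγ : ∀ k, gammaSeq G k = Real.sqrt (t k) := fun k => rfl
  have hγ1 : ∀ k, 1 ≤ gammaSeq G k := by
    intro k
    rw [hγ k]
    calc (1:ℝ) = Real.sqrt 1 := Real.sqrt_one.symm
      _ ≤ Real.sqrt (t k) := Real.sqrt_le_sqrt (ht1 k)
  have hγmono : Monotone (gammaSeq G) := by
    intro a b hab
    rw [hγ a, hγ b]
    exact Real.sqrt_le_sqrt (htmono hab)
  have hγtend : Filter.Tendsto (gammaSeq G) Filter.atTop (nhds lam1) := by
    have h1 := (Real.continuous_sqrt.continuousAt (x := lam1 ^ 2)).tendsto.comp httend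
    have h2 : Real.sqrt (lam1 ^ 2) = lam1 := by
      rw [Real.sqrt_sq hlam0]
    rw [h2] at h1
    exact h1
  constructor
  · intro a b hab
    exact phiMono' (hγ1 a) (hγmono hab)
  · have hφ : Continuous fun x : ℝ => Real.exp x + ((n:ℝ) - 1) - x :=
      (Real.continuous_exp.add continuous_const).sub continuous_id
    exact (hφ.continuousAt.tendsto).comp hγtend
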